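/- Let Φ and P be linear maps on M_n(ℂ) such that Φ ∘ P = P ∘ Φ = P, and such that Φ and P map positive definite states to positive definite states. Suppose there is a constant c ∈ [0,1] such that for every positive definite state ρ, D(Φ(ρ)‖Φ(P(ρ))) ≤ c · D(ρ‖P(ρ)). Then for every positive definite state ρ and every natural number t, D(Φ^[t](ρ)‖P(ρ)) ≤ c^t · D(ρ‖P(ρ)), where Φ^[t] denotes the t-fold composition of Φ with itself. -/
import Mathlib


open scoped ComplexOrder

/-- The matrix logarithm of a (positive definite) matrix, via the continuous
functional calculus. -/
noncomputable def matLog {n : Type*} [Fintype n] [DecidableEq n]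
    (ρ : Matrix n n ℂ) : Matrix n n ℂ :=
  cfc Real.log ρ

/-- The quantum relative entropy of (positive definite) matrices. -/
noncomputable def relEntropy {n : Type*} [Fintype n] [DecidableEq n]
    (ρ σ : Matrix n n ℂ) : ℝ :=
  (Matrix.trace (ρ * (matLog ρ - matLog σ))).re

/-- Entropy contraction iterates: if `Φ ∘ P = P ∘ Φ = P`, both maps preserve positive
definite states, and one-step entropy contraction with constant `c ∈ [0,1]` holds, then
`D(Φ^[t](ρ) ‖ P(ρ)) ≤ c^t · D(ρ ‖ P(ρ))` for all positive definite states `ρ` and all `t`. -/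
theorem relEntropy_contraction_iterate
    {n : Type*} [Fintype n] [DecidableEq n]
    (Φ P : Module.End ℂ (Matrix n n ℂ))
    (hΦP : Φ * P = P) (hPΦ : P * Φ = P)
    (hΦstate : ∀ ρ : Matrix n n ℂ, ρ.PosDef → ρ.trace = 1 →
      (Φ ρ).PosDef ∧ (Φ ρ).trace = 1)
    (hPstate : ∀ ρ : Matrix n n ℂ, ρ.PosDef → ρ.trace = 1 →
      (P ρ).PosDef ∧ (P ρ).trace = 1)
    (c : ℝ) (hc0 : 0 ≤ c) (hc1 : c ≤ 1)
    (hcontr : ∀ ρ : Matrix n n ℂ, ρ.PosDef → ρ.trace = 1 →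
      relEntropy (Φ ρ) (Φ (P ρ)) ≤ c * relEntropy ρ (P ρ)) :
    ∀ (ρ : Matrix n n ℂ), ρ.PosDef → ρ.trace = 1 → ∀ t : ℕ,
      relEntropy ((Φ ^ t) ρ) (P ρ) ≤ c ^ t * relEntropy ρ (P ρ) := by
  intro ρ hρ hρtr t
  -- P ∘ Φ^t = P
  have hPΦt : ∀ t : ℕ, P * Φ ^ t = P := by
    intro t
    induction t with
    | zero => simp
    | succ t ih => rw [pow_succ, ← mul_assoc, ih, hPΦ]
  -- Φ^t preserves states
  have hstate : ∀ t : ℕ, ((Φ ^ t) ρ).PosDef ∧ ((Φ ^ t) ρ).trace = 1 := by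
    intro t
    induction t with
    | zero => simpa using ⟨hρ, hρtr⟩
    | succ t ih =>
      have := hΦstate _ ih.1 ih.2
      rw [pow_succ', Module.End.mul_apply] at *
      exact this
  induction t with
  | zero => simp
  | succ t ih =>
    have hP : P ((Φ ^ t) ρ) = P ρ := by
      have := congrArg (fun f : Module.End ℂ (Matrix n n ℂ) => f ρ) (hPΦt t)
      simpa [Module.End.mul_apply] using this
    have hΦPρ : Φ (P ((Φ ^ t) ρ)) = P ((Φ ^ t) ρ) := by
      have := congrArg (fun f : Module.End ℂ (Matrix n n ℂ) => f ((Φ ^ t) ρ)) hΦP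
      simpa [Module.End.mul_apply] using this
    have key := hcontr _ (hstate t).1 (hstate t).2
    rw [hΦPρ, hP] at key
    have hstep : relEntropy ((Φ ^ (t+1)) ρ) (P ρ) ≤ c * relEntropy ((Φ ^ t) ρ) (P ρ) := by
      rw [pow_succ', Module.End.mul_apply]
      exact key
    calc relEntropy ((Φ ^ (t+1)) ρ) (P ρ) ≤ c * relEntropy ((Φ ^ t) ρ) (P ρ) := hstep
      _ ≤ c * (c ^ t * relEntropy ρ (P ρ)) := by
          exact mul_le_mul_of_nonneg_left ih hc0
      _ = c ^ (t+1) * relEntropy ρ (P ρ) := by ring
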